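/- Relativization for expanding domains: let φ be a one-variable first-order modal formula with counting quantifiers, m = md(φ), and E a unary predicate not occurring in φ. Then φ is satisfiable with respect to QK^exp if and only if the formula E(x) ∧ ζ_exp ∧ φ^E is satisfiable with respect to QK (over constant domain models). -/

import Mathlib

/-! Syntax of one-variable first-order modal formulas with counting quantifiers:
    φ ::= P(x) | ¬φ | (φ∧φ) | ◇φ | ∃[≤c]x φ. -/

inductive Fml : Type
  | atom : ℕ → Fml
  | neg : Fml → Fml
  | conj : Fml → Fml → Fml
  | dia : Fml → Fml
  | countLe : ℕ → Fml → Fml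
deriving DecidableEq

namespace Fml

/-- Subformulas. -/
def sub : Fml → Finset Fml
  | atom n => {atom n}
  | neg ψ => insert (neg ψ) ψ.sub
  | conj ψ χ => insert (conj ψ χ) (ψ.sub ∪ χ.sub)
  | dia ψ => insert (dia ψ) ψ.sub
  | countLe c ψ => insert (countLe c ψ) ψ.sub

/-- Modal depth. -/
def md : Fml → ℕ
  | atom _ => 0
  | neg ψ => ψ.md
  | conj ψ χ => max ψ.md χ.md
  | dia ψ => ψ.md + 1
  | countLe _ ψ => ψ.md

/-- Capacity: the largest counting-quantifier subscript (0 if none). -/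
def cpt : Fml → ℕ
  | atom _ => 0
  | neg ψ => ψ.cpt
  | conj ψ χ => max ψ.cpt χ.cpt
  | dia ψ => ψ.cpt
  | countLe c ψ => max c ψ.cpt

/-- Length of the formula as a string, counting subscripts written in binary. -/
def len : Fml → ℕ
  | atom _ => 1
  | neg ψ => ψ.len + 1
  | conj ψ χ => ψ.len + χ.len + 1
  | dia ψ => ψ.len + 1
  | countLe c ψ => ψ.len + Nat.size c + 1

/-- Predicate symbols occurring in a formula. -/
def preds : Fml → Finset ℕ
  | atom n => {n}
  | neg ψ => ψ.preds
  | conj ψ χ => ψ.preds ∪ χ.preds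
  | dia ψ => ψ.preds
  | countLe _ ψ => ψ.preds

def imp (ψ χ : Fml) : Fml := neg (conj ψ (neg χ))
def or (ψ χ : Fml) : Fml := neg (conj (neg ψ) (neg χ))
def iff (ψ χ : Fml) : Fml := conj (ψ.imp χ) (χ.imp ψ)
def box (ψ : Fml) : Fml := neg (dia (neg ψ))
/-- `∃x ψ := ¬∃[≤0]x ψ`. -/
def ex (ψ : Fml) : Fml := neg (countLe 0 ψ)
/-- `∀x ψ := ∃[≤0]x ¬ψ`. -/
def fal (ψ : Fml) : Fml := countLe 0 (neg ψ)
/-- A tautology. -/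
def top : Fml := neg (conj (atom 0) (neg (atom 0)))

/-- `boxIter n ψ` is `□^n ψ`. -/
def boxIter : ℕ → Fml → Fml
  | 0, ψ => ψ
  | n+1, ψ => (boxIter n ψ).box

/-- `boxLe m ψ` is `⋀_{k=0}^{m} □^k ψ`. -/
def boxLe : ℕ → Fml → Fml
  | 0, ψ => ψ
  | n+1, ψ => conj (boxLe n ψ) (boxIter (n+1) ψ)

end Fml

/-- A first-order Kripke model `M = (W,R,D,d,I)` (unary predicates suffice for the
one-variable fragment). -/
structure KModel where
  W : Type
  R : W → W → Prop
  D : Type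
  Dne : Nonempty D
  dom : W → Set D
  domNe : ∀ w, (dom w).Nonempty
  I : W → ℕ → Set D
  Isub : ∀ w p, I w p ⊆ dom w

/-- Satisfaction `M,w ⊨^a φ`. -/
def KModel.sat (M : KModel) : Fml → M.W → M.D → Prop
  | .atom p, w, a => a ∈ M.I w p
  | .neg ψ, w, a => ¬ M.sat ψ w a
  | .conj ψ χ, w, a => M.sat ψ w a ∧ M.sat χ w a
  | .dia ψ, w, a => ∃ v, M.R w v ∧ M.sat ψ v a
  | .countLe c ψ, w, _ => {b | b ∈ M.dom w ∧ M.sat ψ w b}.encard ≤ (c : ℕ∞)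

def KModel.constDom (M : KModel) : Prop := ∀ u v, M.dom u = M.dom v
def KModel.expDom (M : KModel) : Prop := ∀ u v, M.R u v → M.dom u ⊆ M.dom v
def KModel.decDom (M : KModel) : Prop := ∀ u v, M.R u v → M.dom v ⊆ M.dom u

/-- Satisfiability with respect to QK (constant domains). -/
def satQK (φ : Fml) : Prop :=
  ∃ M : KModel, M.constDom ∧ ∃ w a, a ∈ M.dom w ∧ M.sat φ w a

/-- Satisfiability with respect to QK^exp (expanding domains). -/
def satQKexp (φ : Fml) : Prop :=
  ∃ M : KModel, M.expDom ∧ ∃ w a, a ∈ M.dom w ∧ M.sat φ w a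

/-- Satisfiability with respect to QK^dec (decreasing domains). -/
def satQKdec (φ : Fml) : Prop :=
  ∃ M : KModel, M.decDom ∧ ∃ w a, a ∈ M.dom w ∧ M.sat φ w a

/-- `R` is the immediate-successor (parent–child) relation of a rooted irreflexive
intransitive tree of depth ≤ m with root `r`. -/
def IsTreeOfDepth {W : Type} (R : W → W → Prop) (r : W) (m : ℕ) : Prop :=
  ∃ depth : W → ℕ,
    depth r = 0 ∧ (∀ w, depth w ≤ m) ∧
    (∀ u v, R u v → depth v = depth u + 1) ∧
    (∀ v, v ≠ r → ∃! u, R u v) ∧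
    (∀ v, Relation.ReflTransGen R r v)

/-- Relativization φ^E of a formula to a fresh predicate E. -/
def relE (E : ℕ) : Fml → Fml
  | .atom p => .atom p
  | .neg ψ => .neg (relE E ψ)
  | .conj ψ χ => .conj (relE E ψ) (relE E χ)
  | .dia ψ => .dia (relE E ψ)
  | .countLe c ψ => .countLe c (.conj (.atom E) (relE E ψ))

/-- `ζ_exp := □^{≤m} ∀x (E(x) → □E(x))`. -/
def zetaExp (E m : ℕ) : Fml :=
  Fml.boxLe m (Fml.fal ((Fml.atom E).imp (Fml.box (Fml.atom E))))

/-- `ζ_dec := ∀x □^{≤m} (◇E(x) → E(x))`. -/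
def zetaDec (E m : ℕ) : Fml :=
  Fml.fal (Fml.boxLe m ((Fml.dia (Fml.atom E)).imp (Fml.atom E)))

namespace Stmt5Aux

/-- `Reach R n w v` : `v` is reachable from `w` in exactly `n` R-steps. -/
def Reach {W : Type} (R : W → W → Prop) : ℕ → W → W → Prop
  | 0, w, v => w = v
  | n+1, w, v => ∃ u, R w u ∧ Reach R n u v

@[simp] lemma reach_zero {W : Type} (R : W → W → Prop) (w v : W) :
    Reach R 0 w v ↔ w = v := Iff.rfl

@[simp] lemma reach_succ {W : Type} (R : W → W → Prop) (n : ℕ) (w v : W) :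
    Reach R (n+1) w v ↔ ∃ u, R w u ∧ Reach R n u v := Iff.rfl

lemma reach_snoc {W : Type} {R : W → W → Prop} :
    ∀ {n : ℕ} {w u v : W}, Reach R n w u → R u v → Reach R (n+1) w v := by
  intro n
  induction n with
  | zero => intro w u v h hr; cases h; exact ⟨v, hr, rfl⟩
  | succ n ih =>
      rintro w u v ⟨x, hwx, hx⟩ hr
      exact ⟨x, hwx, ih hx hr⟩

lemma reach_succ_iff {W : Type} {R : W → W → Prop} :
    ∀ {n : ℕ} {w v : W}, Reach R (n+1) w v ↔ ∃ u, Reach R n w u ∧ R u v := by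
  intro n
  induction n with
  | zero =>
      intro w v
      constructor
      · rintro ⟨u, hwu, hu⟩; cases hu; exact ⟨w, rfl, hwu⟩
      · rintro ⟨u, hu, huv⟩; cases hu; exact ⟨v, huv, rfl⟩
  | succ n ih =>
      intro w v
      constructor
      · rintro ⟨u, hwu, hu⟩
        obtain ⟨z, hz, hzv⟩ := ih.mp hu
        exact ⟨z, ⟨u, hwu, hz⟩, hzv⟩
      · rintro ⟨z, ⟨u, hwu, hz⟩, hzv⟩
        exact ⟨u, hwu, ih.mpr ⟨z, hz, hzv⟩⟩

lemma encard_le_zero {α : Type*} {s : Set α} :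
    s.encard ≤ ((0 : ℕ) : ℕ∞) ↔ s = ∅ := by
  simp [nonpos_iff_eq_zero, Set.encard_eq_zero]

lemma sat_box (M : KModel) (ψ : Fml) (w : M.W) (a : M.D) :
    M.sat ψ.box w a ↔ ∀ v, M.R w v → M.sat ψ v a := by
  simp only [Fml.box, KModel.sat, not_exists, not_and, not_not]

lemma sat_imp (M : KModel) (ψ χ : Fml) (w : M.W) (a : M.D) :
    M.sat (ψ.imp χ) w a ↔ (M.sat ψ w a → M.sat χ w a) := by
  simp only [Fml.imp, KModel.sat, not_and, not_not]

lemma sat_fal (M : KModel) (ψ : Fml) (w : M.W) (a : M.D) :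
    M.sat (Fml.fal ψ) w a ↔ ∀ b ∈ M.dom w, M.sat ψ w b := by
  simp only [Fml.fal, KModel.sat, encard_le_zero,
    Set.eq_empty_iff_forall_notMem, Set.mem_setOf_eq, not_and, not_not]

lemma sat_boxIter (M : KModel) (ψ : Fml) :
    ∀ (n : ℕ) (w : M.W) (a : M.D),
      M.sat (Fml.boxIter n ψ) w a ↔ ∀ v, Reach M.R n w v → M.sat ψ v a := by
  intro n
  induction n with
  | zero => intro w a; simp [Fml.boxIter]
  | succ n ih =>
      intro w a
      simp only [Fml.boxIter, sat_box, reach_succ]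
      constructor
      · rintro h v ⟨u, hwu, hu⟩
        exact (ih u a).mp (h u hwu) v hu
      · intro h u hwu
        exact (ih u a).mpr fun v hv => h v ⟨u, hwu, hv⟩

lemma sat_boxLe (M : KModel) (ψ : Fml) :
    ∀ (n : ℕ) (w : M.W) (a : M.D),
      M.sat (Fml.boxLe n ψ) w a ↔
        ∀ k, k ≤ n → ∀ v, Reach M.R k w v → M.sat ψ v a := by
  intro n
  induction n with
  | zero =>
      intro w a
      simp only [Fml.boxLe, Nat.le_zero]
      constructor
      · rintro h k rfl v hv; cases hv; exact h
      · intro h; exact h 0 rfl w rfl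
  | succ n ih =>
      intro w a
      simp only [Fml.boxLe]
      constructor
      · rintro ⟨h1, h2⟩ k hk v hv
        rcases Nat.lt_succ_iff_lt_or_eq.mp (Nat.lt_succ_of_le hk) with h | rfl
        · exact (ih w a).mp h1 k (Nat.lt_succ_iff.mp h) v hv
        · exact (sat_boxIter M ψ (n+1) w a).mp h2 v hv
      · intro h
        exact ⟨(ih w a).mpr fun k hk v hv => h k (hk.trans (Nat.le_succ n)) v hv,
          (sat_boxIter M ψ (n+1) w a).mpr fun v hv => h (n+1) le_rfl v hv⟩

/-- The constant-domain model built from an expanding-domain model: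
domains become everything, and `E` is interpreted as the old domain. -/
def expToConst (M : KModel) (E : ℕ) : KModel where
  W := M.W
  R := M.R
  D := M.D
  Dne := M.Dne
  dom := fun _ => Set.univ
  domNe := fun _ => by have := M.Dne; exact Set.univ_nonempty
  I := fun v p => if p = E then M.dom v else M.I v p
  Isub := fun _ _ => Set.subset_univ _

lemma expToConst_sat (M : KModel) (E : ℕ) :
    ∀ ψ : Fml, E ∉ ψ.preds → ∀ (v : M.W) (x : M.D),
      (expToConst M E).sat (relE E ψ) v x ↔ M.sat ψ v x := by
  intro ψ
  induction ψ with
  | atom p =>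
      intro hp v x
      simp only [Fml.preds, Finset.mem_singleton] at hp
      simp only [relE, KModel.sat, expToConst]
      rw [if_neg (fun h => hp h.symm)]
  | neg ψ ih =>
      intro hp v x
      simp only [Fml.preds] at hp
      simp only [relE, KModel.sat, ih hp]
  | conj ψ χ ih1 ih2 =>
      intro hp v x
      simp only [Fml.preds, Finset.mem_union, not_or] at hp
      simp only [relE, KModel.sat, ih1 hp.1, ih2 hp.2]
  | dia ψ ih =>
      intro hp v x
      simp only [Fml.preds] at hp
      simp only [relE, KModel.sat]
      constructor
      · rintro ⟨u, hu, h⟩; exact ⟨u, hu, (ih hp u x).mp h⟩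
      · rintro ⟨u, hu, h⟩; exact ⟨u, hu, (ih hp u x).mpr h⟩
  | countLe c ψ ih =>
      intro hp v x
      simp only [Fml.preds] at hp
      simp only [relE, KModel.sat]
      have hset : {b | b ∈ (expToConst M E).dom v ∧
            (b ∈ (expToConst M E).I v E ∧
              (expToConst M E).sat (relE E ψ) v b)}
          = {b | b ∈ M.dom v ∧ M.sat ψ v b} := by
        ext b
        have hIE : (expToConst M E).I v E = M.dom v := if_pos rfl
        simp only [Set.mem_setOf_eq, hIE, ih hp v b]
        exact ⟨fun h => ⟨h.2.1, h.2.2⟩, fun h => ⟨Set.mem_univ b, h.1, h.2⟩⟩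
      rw [hset]
      rfl

end Stmt5Aux

open Stmt5Aux in
/-- φ is satisfiable with respect to QK^exp iff `E(x) ∧ ζ_exp ∧ φ^E` is
satisfiable with respect to QK, for any predicate E not occurring in φ. -/
theorem stmt_5 (φ : Fml) (E : ℕ) (hE : E ∉ φ.preds) :
    satQKexp φ ↔
      satQK (Fml.conj (Fml.atom E) (Fml.conj (zetaExp E φ.md) (relE E φ))) := by
  set m := φ.md with hm
  constructor
  · -- forward direction
    rintro ⟨M, hexp, w, a, ha, hsat⟩
    refine ⟨expToConst M E, fun _ _ => rfl, w, a, Set.mem_univ a, ?_, ?_, ?_⟩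
    · -- E(a)
      show a ∈ (if E = E then M.dom w else M.I w E)
      rw [if_pos rfl]; exact ha
    · -- ζ_exp
      rw [zetaExp]
      apply (sat_boxLe (expToConst M E) _ m w a).mpr
      intro k _ v _
      apply (sat_fal (expToConst M E) _ v a).mpr
      intro b _
      rw [sat_imp]
      intro hbE
      rw [sat_box]
      intro u hu
      show b ∈ (if E = E then M.dom u else M.I u E)
      rw [if_pos rfl]
      have hbv : b ∈ M.dom v := by
        have : b ∈ (if E = E then M.dom v else M.I v E) := hbE
        rwa [if_pos rfl] at this
      exact hexp v u hu hbv
    · exact (expToConst_sat M E φ hE w a).mpr hsat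
  · -- backward direction
    rintro ⟨M, hconst, w, a, ha, haE, hζ, hφE⟩
    -- ζ_exp unpacked
    have hZ : ∀ k, k ≤ m → ∀ v, Reach M.R k w v →
        ∀ b ∈ M.I v E, ∀ u, M.R v u → b ∈ M.I u E := by
      intro k hk v hv b hbE u hvu
      have h1 := (sat_boxLe M _ m w a).mp hζ k hk v hv
      have h2 := (sat_fal M _ v a).mp h1 b (M.Isub v E hbE)
      have h3 := (sat_imp M _ _ v b).mp h2 hbE
      exact (sat_box M _ v b).mp h3 u hvu
    have hA : ∀ k, k ≤ m → ∀ v, Reach M.R k w v → a ∈ M.I v E := by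
      intro k
      induction k with
      | zero => intro _ v hv; cases hv; exact haE
      | succ k ih =>
          intro hk v hv
          obtain ⟨u, hu, huv⟩ := reach_succ_iff.mp hv
          exact hZ k (Nat.le_of_succ_le hk) u hu a
            (ih (Nat.le_of_succ_le hk) u hu) v huv
    -- build the expanding-domain model
    let M' : KModel :=
      { W := {p : M.W × ℕ // p.2 ≤ m ∧ Reach M.R p.2 w p.1}
        R := fun p q => M.R p.1.1 q.1.1 ∧ q.1.2 = p.1.2 + 1
        D := M.D
        Dne := M.Dne
        dom := fun p => M.I p.1.1 E
        domNe := fun p => ⟨a, hA p.1.2 p.2.1 p.1.1 p.2.2⟩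
        I := fun p n => M.I p.1.1 n ∩ M.I p.1.1 E
        Isub := fun _ _ => Set.inter_subset_right }
    have key : ∀ ψ : Fml, E ∉ ψ.preds → ∀ (k : ℕ) (v : M.W)
        (h1 : k ≤ m) (h2 : Reach M.R k w v), k + ψ.md ≤ m →
        ∀ x : M.D, x ∈ M.I v E →
        (M'.sat ψ ⟨(v, k), h1, h2⟩ x ↔ M.sat (relE E ψ) v x) := by
      intro ψ
      induction ψ with
      | atom p =>
          intro _ k v h1 h2 _ x hx
          show x ∈ M.I v p ∩ M.I v E ↔ x ∈ M.I v p
          simp [hx]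
      | neg ψ ih =>
          intro hp k v h1 h2 h3 x hx
          simp only [Fml.preds] at hp
          show ¬ _ ↔ ¬ _
          rw [ih hp k v h1 h2 h3 x hx]
      | conj ψ χ ih1 ih2 =>
          intro hp k v h1 h2 h3 x hx
          simp only [Fml.preds, Finset.mem_union, not_or] at hp
          have h3' : k + max ψ.md χ.md ≤ m := h3
          have hm1 : k + ψ.md ≤ m :=
            le_trans (Nat.add_le_add_left (Nat.le_max_left _ _) k) h3'
          have hm2 : k + χ.md ≤ m :=
            le_trans (Nat.add_le_add_left (Nat.le_max_right _ _) k) h3'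
          show (_ ∧ _) ↔ (_ ∧ _)
          rw [ih1 hp.1 k v h1 h2 hm1 x hx, ih2 hp.2 k v h1 h2 hm2 x hx]
      | dia ψ ih =>
          intro hp k v h1 h2 h3 x hx
          simp only [Fml.preds] at hp
          have hk1 : k + 1 ≤ m := by
            simp only [Fml.md] at h3; omega
          have hm1 : (k + 1) + ψ.md ≤ m := by
            simp only [Fml.md] at h3; omega
          constructor
          · rintro ⟨⟨⟨u, j⟩, hj, hr⟩, ⟨hR, hjk⟩, hq⟩
            simp only at hR hjk
            subst hjk
            have hxu : x ∈ M.I u E := hZ k h1 v h2 x hx u hR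
            exact ⟨u, hR, (ih hp (k+1) u hj hr hm1 x hxu).mp hq⟩
          · rintro ⟨u, hR, hu⟩
            have hxu : x ∈ M.I u E := hZ k h1 v h2 x hx u hR
            refine ⟨⟨(u, k+1), hk1, reach_snoc h2 hR⟩, ⟨hR, rfl⟩, ?_⟩
            exact (ih hp (k+1) u hk1 (reach_snoc h2 hR) hm1 x hxu).mpr hu
      | countLe c ψ ih =>
          intro hp k v h1 h2 h3 x hx
          simp only [Fml.preds] at hp
          have hm1 : k + ψ.md ≤ m := by
            simp only [Fml.md] at h3; omega
          show Set.encard _ ≤ _ ↔ Set.encard _ ≤ _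
          have hset : {b | b ∈ M'.dom ⟨(v, k), h1, h2⟩ ∧
                M'.sat ψ ⟨(v, k), h1, h2⟩ b}
              = {b | b ∈ M.dom v ∧
                  (M.sat (Fml.atom E) v b ∧ M.sat (relE E ψ) v b)} := by
            ext b
            simp only [Set.mem_setOf_eq]
            constructor
            · rintro ⟨hbE, hb⟩
              exact ⟨M.Isub v E hbE, hbE, (ih hp k v h1 h2 hm1 b hbE).mp hb⟩
            · rintro ⟨_, hbE, hb⟩
              exact ⟨hbE, (ih hp k v h1 h2 hm1 b hbE).mpr hb⟩
          rw [hset]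
          rfl
    refine ⟨M', ?_, ⟨(w, 0), Nat.zero_le m, rfl⟩, a, haE, ?_⟩
    · rintro ⟨⟨v, k⟩, hk, hv⟩ ⟨⟨u, j⟩, hj, hu⟩ ⟨hR, hjk⟩ b hb
      exact hZ k hk v hv b hb u hR
    · exact (key φ hE 0 w (Nat.zero_le m) rfl (by omega) a haE).mpr hφE
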